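/- Let a and b be two non-adjacent vertices of a graph G with more than k common neighbors, and let F be a set of at most k edges such that G−F is a disjoint union of 2-clubs. Then at least one common neighbor of a and b in G remains adjacent to both a and b in G−F, and hence dist_{G−F}(a,b) = 2. -/

import Mathlib

def IsTwoClubCluster {V : Type*} (G : SimpleGraph V) : Prop :=
  ∀ u v : V, G.Reachable u v → G.dist u v ≤ 2

/-- with more than k common neighbors, some common neighbor
survives all k deletions, so the distance in G−F is exactly 2. -/
theorem common_neighbor_survives {V : Type*} [Fintype V] [DecidableEq V]
    (G : SimpleGraph V) (k : ℕ) (a b : V) (hne : a ≠ b) (hnadj : ¬ G.Adj a b)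
    (hcn : k < {v : V | G.Adj a v ∧ G.Adj b v}.ncard)
    (F : Set (Sym2 V)) (hFsub : F ⊆ G.edgeSet) (hFcard : F.ncard ≤ k)
    (hF : IsTwoClubCluster (G.deleteEdges F)) :
    (∃ w : V, G.Adj a w ∧ G.Adj b w ∧
        (G.deleteEdges F).Adj a w ∧ (G.deleteEdges F).Adj b w) ∧
      (G.deleteEdges F).dist a b = 2 := by
  classical
  set CN : Set V := {v : V | G.Adj a v ∧ G.Adj b v} with hCN
  set K : Set V := {v : V | v ∈ CN ∧ (s(a,v) ∈ F ∨ s(b,v) ∈ F)} with hK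
  have hinj : Set.InjOn (fun v => if s(a,v) ∈ F then s(a,v) else s(b,v)) K := by
    rintro x ⟨⟨hax, hbx⟩, hx⟩ y ⟨⟨hay, hby⟩, hy⟩ hxy
    simp only at hxy
    by_cases h1 : s(a,x) ∈ F <;> by_cases h2 : s(a,y) ∈ F
    · rw [if_pos h1, if_pos h2, Sym2.eq_iff] at hxy
      rcases hxy with ⟨-, h⟩ | ⟨h, rfl⟩
      · exact h
      · rw [← h] at hay; exact absurd hay (G.loopless.irrefl _)
    · rw [if_pos h1, if_neg h2, Sym2.eq_iff] at hxy
      rcases hxy with ⟨h, -⟩ | ⟨-, rfl⟩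
      · exact absurd h hne
      · exact absurd hbx (G.loopless.irrefl _)
    · rw [if_neg h1, if_pos h2, Sym2.eq_iff] at hxy
      rcases hxy with ⟨h, -⟩ | ⟨rfl, -⟩
      · exact absurd h.symm hne
      · exact absurd hby (G.loopless.irrefl _)
    · rw [if_neg h1, if_neg h2, Sym2.eq_iff] at hxy
      rcases hxy with ⟨-, h⟩ | ⟨-, rfl⟩
      · exact h
      · exact absurd hbx (G.loopless.irrefl _)
  have hmaps : Set.MapsTo (fun v => if s(a,v) ∈ F then s(a,v) else s(b,v)) K F := by
    rintro x ⟨-, hx⟩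
    by_cases h1 : s(a,x) ∈ F
    · simp [h1]
    · simp only [if_neg h1]; tauto
  have hKcard : K.ncard ≤ F.ncard :=
    Set.ncard_le_ncard_of_injOn _ hmaps hinj (Set.toFinite _)
  have hsurv : ∃ w, w ∈ CN ∧ w ∉ K := by
    by_contra h
    push_neg at h
    have hsub : CN ⊆ K := fun v hv => h v hv
    have := Set.ncard_le_ncard hsub (Set.toFinite _)
    omega
  obtain ⟨w, hwCN, hwK⟩ := hsurv
  obtain ⟨haw, hbw⟩ := hwCN
  have hnF : s(a,w) ∉ F ∧ s(b,w) ∉ F := by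
    constructor <;> intro h <;> exact hwK ⟨⟨haw, hbw⟩, by tauto⟩
  have hda : (G.deleteEdges F).Adj a w := by
    rw [SimpleGraph.deleteEdges_adj]; exact ⟨haw, hnF.1⟩
  have hdb : (G.deleteEdges F).Adj b w := by
    rw [SimpleGraph.deleteEdges_adj]; exact ⟨hbw, hnF.2⟩
  refine ⟨⟨w, haw, hbw, hda, hdb⟩, ?_⟩
  have hle := SimpleGraph.dist_le (SimpleGraph.Walk.cons hda hdb.symm.toWalk)
  simp only [SimpleGraph.Walk.length_cons, SimpleGraph.Adj.toWalk,
    SimpleGraph.Walk.length_cons, SimpleGraph.Walk.length_nil] at hle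
  have hreach : (G.deleteEdges F).Reachable a b :=
    ⟨SimpleGraph.Walk.cons hda hdb.symm.toWalk⟩
  have h0 : (G.deleteEdges F).dist a b ≠ 0 := by
    simp [SimpleGraph.dist_eq_zero_iff_eq_or_not_reachable, hne, hreach]
  have h1 : (G.deleteEdges F).dist a b ≠ 1 := by
    intro h
    have := (SimpleGraph.dist_eq_one_iff_adj).mp h
    rw [SimpleGraph.deleteEdges_adj] at this
    exact hnadj this.1
  omega
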